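/- Let G be a chordal graph, let τ be a prefix of an MCS ordering, and let S be the set of unvisited vertices having the maximum number of visited neighbors. If x, y ∈ S are connected in the induced subgraph G[V \ τ], then the set of AMOs of G extendable from the MCS prefix τ followed by x is disjoint from the set of AMOs extendable from τ followed by y. -/

import Mathlib

/-- A graph is chordal if every cycle of length at least 4 has a chord. -/
def IsChordal {V : Type} (G : SimpleGraph V) : Prop :=
  ∀ ⦃v : V⦄ (c : G.Walk v v), c.IsCycle → 4 ≤ c.length →
    ∃ u w : V, u ∈ c.support ∧ w ∈ c.support ∧ G.Adj u w ∧ s(u, w) ∉ c.edges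

/-- Number of neighbors of `v` among the visited vertices `pre`. -/
def mcsLabel {V : Type} [DecidableEq V] (G : SimpleGraph V) [DecidableRel G.Adj]
    (pre : List V) (v : V) : ℕ :=
  pre.countP (fun u => decide (G.Adj u v))

/-- `τ` is (a prefix of) a Maximum Cardinality Search ordering. -/
def IsMCSPrefix {V : Type} [DecidableEq V] (G : SimpleGraph V) [DecidableRel G.Adj]
    (τ : List V) : Prop :=
  τ.Nodup ∧ ∀ i, (h : i < τ.length) → ∀ w : V, w ∉ τ.take i →
    mcsLabel G (τ.take i) w ≤ mcsLabel G (τ.take i) (τ.get ⟨i, h⟩)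

/-- A complete MCS ordering of `G`. -/
def IsMCSOrder {V : Type} [DecidableEq V] (G : SimpleGraph V) [DecidableRel G.Adj]
    (τ : List V) : Prop :=
  IsMCSPrefix G τ ∧ ∀ v : V, v ∈ τ

/-- The AMO `D` is extendable from the prefix `pre`: some complete MCS ordering
with prefix `pre` induces `D` by orienting each edge from the earlier to the
later vertex. -/
def ExtendableFrom {V : Type} [DecidableEq V] (G : SimpleGraph V) [DecidableRel G.Adj]
    (pre : List V) (D : V → V → Prop) : Prop :=
  ∃ σ : List V, IsMCSOrder G σ ∧ pre <+: σ ∧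
    ∀ u v : V, D u v ↔ G.Adj u v ∧ σ.idxOf u < σ.idxOf v

namespace Stmt6Aux
open List SimpleGraph

set_option linter.unusedSectionVars false

variable {V : Type} [DecidableEq V] {G : SimpleGraph V}

/-! ### indexOf helpers -/

lemma indexOf_lt_of_mem_take {l : List V} {i : ℕ} {a : V} (h : a ∈ l.take i) :
    l.idxOf a < i := by
  have h1 : l.idxOf a = (l.take i).idxOf a := by
    conv_lhs => rw [← List.take_append_drop i l]
    rw [List.idxOf_append_of_mem h]
  have h2 : (l.take i).idxOf a < (l.take i).length := List.idxOf_lt_length_iff.2 h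
  rw [h1]
  exact lt_of_lt_of_le h2 (by simpa using (List.length_take).le.trans (min_le_left _ _))

lemma mem_take_of_indexOf_lt {l : List V} {i : ℕ} {a : V} (ha : a ∈ l)
    (h : l.idxOf a < i) : a ∈ l.take i := by
  by_contra hna
  have hsplit : l = l.take i ++ l.drop i := (List.take_append_drop i l).symm
  have hmem : a ∈ l.drop i := by
    rcases (List.mem_append.1 (hsplit ▸ ha)) with h' | h'
    · exact absurd h' hna
    · exact h'
  have : l.idxOf a = (l.take i).length + (l.drop i).idxOf a := by
    conv_lhs => rw [hsplit]
    rw [List.idxOf_append_of_notMem hna]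
  have hlen : (l.take i).length = min i l.length := List.length_take
  have hil : i ≤ l.length := by
    by_contra hc
    push_neg at hc
    exact hna (by rw [List.take_of_length_le hc.le]; exact ha)
  omega

lemma indexOf_inj {l : List V} {a b : V} (ha : a ∈ l) (hb : b ∈ l)
    (h : l.idxOf a = l.idxOf b) : a = b := by
  have h1 : l.idxOf a < l.length := List.idxOf_lt_length_iff.2 ha
  have := List.getElem_idxOf h1
  have h2 : l.idxOf b < l.length := List.idxOf_lt_length_iff.2 hb
  have h3 := List.getElem_idxOf h2
  rw [← this, ← h3]
  simp only [h]

/-! ### countP strict mono -/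

lemma countP_strict_mono {l : List V} {p q : V → Bool}
    (hmono : ∀ a ∈ l, p a → q a) {u : V} (hu : u ∈ l) (hqu : q u) (hpu : ¬ p u) :
    l.countP p < l.countP q := by
  have hperm := List.perm_cons_erase hu
  rw [hperm.countP_eq p, hperm.countP_eq q]
  rw [List.countP_cons, List.countP_cons]
  have hle : (l.erase u).countP p ≤ (l.erase u).countP q :=
    List.countP_mono_left (fun x hx => hmono x (List.mem_of_mem_erase hx))
  have h1 : (if q u = true then 1 else 0) = 1 := by simp [hqu]
  have h2 : (if p u = true then 1 else 0) = 0 := by simp [hpu]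
  omega

/-! ### chord-free lists -/

def NCfree (G : SimpleGraph V) : List V → Prop
  | [] => True
  | x :: t => (∀ z ∈ t.tail, ¬ G.Adj x z) ∧ NCfree G t

lemma NCfree_nil : NCfree G [] := trivial

lemma NCfree_singleton (x : V) : NCfree G [x] := by
  constructor
  · intro z hz; simp at hz
  · trivial

lemma NCfree_prefix : ∀ {l l₁ : List V}, NCfree G l → l₁ <+: l → NCfree G l₁ := by
  intro l
  induction l with
  | nil => intro l₁ _ h; rw [List.prefix_nil.1 h]; trivial
  | cons x t ih =>
    intro l₁ hnc hpre
    cases l₁ with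
    | nil => trivial
    | cons y t₁ =>
      obtain ⟨rfl, ht⟩ := (List.cons_prefix_cons.1 hpre)
      refine ⟨fun z hz => hnc.1 z ?_, ih hnc.2 ht⟩
      cases t₁ with
      | nil => simp at hz
      | cons u t₁' =>
        cases t with
        | nil => simp [List.prefix_nil] at ht
        | cons v t' =>
          obtain ⟨rfl, ht'⟩ := List.cons_prefix_cons.1 ht
          exact ht'.subset hz

lemma NCfree_concat {l : List V} {d : V} (h : NCfree G l)
    (hd : ∀ u ∈ l.dropLast, ¬ G.Adj u d) : NCfree G (l ++ [d]) := by
  induction l with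
  | nil => exact NCfree_singleton d
  | cons x t ih =>
    refine ⟨?_, ih h.2 (fun u hu => hd u ?_)⟩
    · intro z hz
      cases t with
      | nil => exact absurd hz (by simp)
      | cons y t' =>
        have hz2 : z ∈ t' ++ [d] := hz
        rcases List.mem_append.1 hz2 with h' | h'
        · exact h.1 z h'
        · have : z = d := by simpa using h'
          subst this
          apply hd
          rw [List.dropLast_cons₂]
          exact List.mem_cons_self
    · cases t with
      | nil => simp at hu
      | cons y t' =>
        rw [List.dropLast_cons₂]
        exact List.mem_cons_of_mem _ hu

lemma NC_adj_split : ∀ {l : List V}, NCfree G l → ∀ {u w : V}, u ∈ l → w ∈ l → G.Adj u w →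
    ∃ l₁ l₂, l = l₁ ++ u :: w :: l₂ ∨ l = l₁ ++ w :: u :: l₂ := by
  intro l
  induction l with
  | nil => intro _ _ _ hu; simp at hu
  | cons x t ih =>
    intro hnc u w hu hw hadj
    have hne : u ≠ w := G.ne_of_adj hadj
    rcases List.mem_cons.1 hu with rfl | hu'
    · -- u = x
      have hwt : w ∈ t := by
        rcases List.mem_cons.1 hw with rfl | h'
        · exact absurd rfl hne
        · exact h'
      cases t with
      | nil => simp at hwt
      | cons y t' =>
        rcases List.mem_cons.1 hwt with rfl | hwt'
        · exact ⟨[], t', Or.inl rfl⟩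
        · exact absurd hadj (hnc.1 w hwt')
    · rcases List.mem_cons.1 hw with rfl | hw'
      · -- w = x, u ∈ t
        cases t with
        | nil => simp at hu'
        | cons y t' =>
          rcases List.mem_cons.1 hu' with rfl | hu''
          · exact ⟨[], t', Or.inr rfl⟩
          · exact absurd hadj.symm (hnc.1 u hu'')
      · obtain ⟨l₁, l₂, hsplit⟩ := ih hnc.2 hu' hw' hadj
        exact ⟨x :: l₁, l₂, by rcases hsplit with h' | h' <;> [left; right] <;> rw [h'] <;> rfl⟩

/-! ### edge lists -/

def edgeList : List V → List (Sym2 V)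
  | [] => []
  | [_] => []
  | x :: y :: t => s(x, y) :: edgeList (y :: t)

lemma mem_edgeList_cons_cons {x y : V} {t : List V} {e : Sym2 V} :
    e ∈ edgeList (x :: y :: t) ↔ e = s(x, y) ∨ e ∈ edgeList (y :: t) := by
  simp [edgeList]

lemma edgeList_of_split : ∀ (l₁ : List V) {a b : V} (l₂ : List V),
    s(a, b) ∈ edgeList (l₁ ++ a :: b :: l₂) := by
  intro l₁
  induction l₁ with
  | nil => intro a b l₂; simp [edgeList]
  | cons x t ih =>
    intro a b l₂
    rcases h : t ++ a :: b :: l₂ with _ | ⟨y, r⟩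
    · simp at h
    · have e1 : (x :: t) ++ a :: b :: l₂ = x :: y :: r := by rw [List.cons_append, h]
      rw [e1]
      rw [show edgeList (x :: y :: r) = s(x, y) :: edgeList (y :: r) from rfl]
      refine List.mem_cons_of_mem _ ?_
      rw [← h]
      exact ih l₂

lemma edgeList_mem_split : ∀ {l : List V} {e : Sym2 V}, e ∈ edgeList l →
    ∃ l₁ l₂ a b, l = l₁ ++ a :: b :: l₂ ∧ e = s(a, b) := by
  intro l
  induction l with
  | nil => intro e he; simp [edgeList] at he
  | cons x t ih =>
    intro e he
    cases t with
    | nil => simp [edgeList] at he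
    | cons y t' =>
      rcases mem_edgeList_cons_cons.1 he with rfl | h'
      · exact ⟨[], t', x, y, rfl, rfl⟩
      · obtain ⟨l₁, l₂, a, b, hsplit, he'⟩ := ih h'
        exact ⟨x :: l₁, l₂, a, b, by rw [List.cons_append, ← hsplit], he'⟩

lemma mem_of_mem_edgeList {l : List V} {e : Sym2 V} (he : e ∈ edgeList l) {v : V}
    (hv : v ∈ e) : v ∈ l := by
  obtain ⟨l₁, l₂, a, b, rfl, rfl⟩ := edgeList_mem_split he
  rcases Sym2.mem_iff.1 hv with rfl | rfl <;> simp

/-! ### walks from chains -/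

lemma exists_walk_of_chain : ∀ (x : V) (l : List V), List.Chain G.Adj x l →
    ∃ p : G.Walk x (l.getLastD x), p.support = x :: l ∧ p.edges = edgeList (x :: l) ∧
      p.length = l.length := by
  intro x l
  induction l generalizing x with
  | nil => intro _; exact ⟨SimpleGraph.Walk.nil, rfl, rfl, rfl⟩
  | cons y t ih =>
    intro hc
    unfold List.Chain at hc; rw [List.isChain_cons_cons] at hc
    obtain ⟨q, hq1, hq2, hq3⟩ := ih y hc.2
    rw [List.getLastD_cons]
    refine ⟨SimpleGraph.Walk.cons hc.1 q, ?_, ?_, ?_⟩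
    · rw [SimpleGraph.Walk.support_cons, hq1]
    · rw [SimpleGraph.Walk.edges_cons, hq2]
      rfl
    · rw [SimpleGraph.Walk.length_cons, hq3]; simp

/-! ### The chordless-cycle contradiction -/

lemma cycleContra (hch : IsChordal G) {c d : V} {A B : List V}
    (hAne : A ≠ []) (hBne : B ≠ [])
    (hchA : A.Chain' G.Adj) (hchB : B.Chain' G.Adj)
    (hncA : NCfree G A) (hncB : NCfree G B)
    (hndA : A.Nodup) (hndB : B.Nodup)
    (hAc : G.Adj (A.head hAne) c) (hBc : G.Adj (B.head hBne) c)
    (hAtc : ∀ u ∈ A.tail, ¬ G.Adj u c) (hBtc : ∀ u ∈ B.tail, ¬ G.Adj u c)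
    (hcross : ∀ u ∈ A, ∀ v ∈ B, ¬ G.Adj u v ∧ u ≠ v)
    (hdA : G.Adj (A.getLast hAne) d) (hdB : G.Adj (B.getLast hBne) d)
    (hdA' : ∀ u ∈ A.dropLast, ¬ G.Adj u d) (hdB' : ∀ u ∈ B.dropLast, ¬ G.Adj u d)
    (hdc : ¬ G.Adj d c) (hdnA : d ∉ A) (hdnB : d ∉ B)
    (hcnA : c ∉ A) (hcnB : c ∉ B) (hcd : c ≠ d) : False := by
  set a0 := A.head hAne with ha0
  set b0 := B.head hBne with hb0
  set aL := A.getLast hAne with haL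
  set bL := B.getLast hBne with hbL
  have ha0A : a0 ∈ A := List.head_mem hAne
  have hb0B : b0 ∈ B := List.head_mem hBne
  have heA : A = a0 :: A.tail := (List.cons_head_tail hAne).symm
  have heB : B = b0 :: B.tail := (List.cons_head_tail hBne).symm
  -- chain for A ++ [d]
  have hchainAd : (A ++ [d]).Chain' G.Adj := by
    refine List.isChain_append.2 ⟨hchA, List.isChain_singleton d, ?_⟩
    intro x hx y hy
    rw [List.getLast?_eq_getLast hAne] at hx
    simp only [Option.mem_some_iff] at hx
    simp only [List.head?_cons, Option.mem_some_iff] at hy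
    rw [← hx, ← hy] at *
    exact hdA
  have hchain1 : List.Chain G.Adj a0 (A.tail ++ [d]) := by
    have h2 := hchainAd
    rw [heA] at h2
    exact h2
  have hq1 := exists_walk_of_chain (G := G) a0 (A.tail ++ [d]) hchain1
  rw [List.getLastD_concat] at hq1
  obtain ⟨q1, hsup1, hedg1, hlen1⟩ := hq1
  have hsup1' : q1.support = A ++ [d] := by rw [hsup1]; rw [heA]; rfl
  have hedg1' : q1.edges = edgeList (A ++ [d]) := by rw [hedg1]; rw [heA]; rfl
  -- chain for c :: B ++ [d]
  have hchainBd : (c :: (B ++ [d])).Chain' G.Adj := by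
    have hcB : (c :: B).Chain' G.Adj := by
      rw [heB]
      exact List.isChain_cons_cons.2 ⟨hBc.symm, by rw [← heB]; exact hchB⟩
    have : (c :: B) ++ [d] = c :: (B ++ [d]) := rfl
    rw [← this]
    refine List.isChain_append.2 ⟨hcB, List.isChain_singleton d, ?_⟩
    intro x hx y hy
    rw [List.getLast?_eq_getLast (l := c :: B) (by simp)] at hx
    simp only [Option.mem_some_iff] at hx
    simp only [List.head?_cons, Option.mem_some_iff] at hy
    have hgl : (c :: B).getLast (by simp) = bL := by
      rw [List.getLast_cons hBne]
    rw [← hx, ← hy, hgl]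
    exact hdB
  have hchain2 : List.Chain G.Adj c (B ++ [d]) := hchainBd
  have hq2 := exists_walk_of_chain (G := G) c (B ++ [d]) hchain2
  rw [List.getLastD_concat] at hq2
  obtain ⟨q2, hsup2, hedg2, hlen2⟩ := hq2
  -- the closed walk
  let p : G.Walk a0 c := q1.append q2.reverse
  have hsupp : p.support = (A ++ [d]) ++ (B.reverse ++ [c]) := by
    show (q1.append q2.reverse).support = _
    rw [SimpleGraph.Walk.support_append, hsup1', SimpleGraph.Walk.support_reverse, hsup2]
    congr 1
    rw [List.reverse_cons, List.reverse_append]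
    simp
  have hedgp : p.edges = edgeList (A ++ [d]) ++ (edgeList (c :: (B ++ [d]))).reverse := by
    show (q1.append q2.reverse).edges = _
    rw [SimpleGraph.Walk.edges_append, hedg1', SimpleGraph.Walk.edges_reverse, hedg2]
  have hdisjAB : ∀ x ∈ A, x ∉ B := fun x hx hxB => (hcross x hx x hxB).2 rfl
  have hpath : p.IsPath := by
    rw [SimpleGraph.Walk.isPath_def, hsupp]
    rw [List.nodup_append]
    refine ⟨?_, ?_, ?_⟩
    · rw [List.nodup_append]
      refine ⟨hndA, List.nodup_singleton d, ?_⟩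
      intro x hx b hb
      simp only [List.mem_singleton] at hb
      subst hb
      rintro rfl
      exact hdnA hx
    · rw [List.nodup_append]
      refine ⟨List.nodup_reverse.2 hndB, List.nodup_singleton c, ?_⟩
      intro x hx b hb
      simp only [List.mem_singleton] at hb
      subst hb
      rintro rfl
      exact hcnB (List.mem_reverse.1 hx)
    · intro x hx b hx2 hxb
      subst hxb
      rcases List.mem_append.1 hx with hxA | hxd
      · rcases List.mem_append.1 hx2 with hxB | hxc
        · exact hdisjAB x hxA (List.mem_reverse.1 hxB)
        · have : x = c := by simpa using hxc
          exact hcnA (this ▸ hxA)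
      · have hxd' : x = d := by simpa using hxd
        rcases List.mem_append.1 hx2 with hxB | hxc
        · exact hdnB (hxd' ▸ List.mem_reverse.1 hxB)
        · have hxc' : x = c := by simpa using hxc
          exact hcd (hxc'.symm.trans hxd')
  have hclose : s(c, a0) ∉ p.edges := by
    rw [hedgp]
    intro hmem
    rcases List.mem_append.1 hmem with h1 | h2
    · have : c ∈ A ++ [d] := mem_of_mem_edgeList h1 (Sym2.mem_mk_left c a0)
      rcases List.mem_append.1 this with h' | h'
      · exact hcnA h'
      · exact hcd (by simpa using h')
    · rw [List.mem_reverse] at h2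
      obtain ⟨l₁, l₂, a', b', hsplit, he⟩ := edgeList_mem_split h2
      rcases Sym2.eq_iff.1 he with ⟨hc1, hc2⟩ | ⟨hc1, hc2⟩
      · -- c = a', a0 = b'
        cases l₁ with
        | nil =>
          simp only [List.nil_append] at hsplit
          have hb'0 : b' ∈ B ++ [d] := by
            rw [List.cons.injEq] at hsplit
            rw [hsplit.2]
            simp
          rcases List.mem_append.1 hb'0 with h' | h'
          · exact (hcross a0 ha0A b' h').2 (by rw [hc2])
          · have : b' = d := by simpa using h'
            rw [← hc2] at this
            subst this
            exact hdnA ha0A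
        | cons e l₁' =>
          rw [List.cons_append, List.cons.injEq] at hsplit
          have : a' ∈ B ++ [d] := by
            rw [hsplit.2]; simp
          rw [← hc1] at this
          rcases List.mem_append.1 this with h' | h'
          · exact hcnB h'
          · exact hcd (by simpa using h')
      · -- c = b', a0 = a'
        cases l₁ with
        | nil =>
          simp only [List.nil_append] at hsplit
          rw [List.cons.injEq] at hsplit
          have : b' ∈ B ++ [d] := by rw [hsplit.2]; simp
          rw [← hc1] at this
          rcases List.mem_append.1 this with h' | h'
          · exact hcnB h'
          · exact hcd (by simpa using h')
        | cons e l₁' =>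
          rw [List.cons_append, List.cons.injEq] at hsplit
          have : b' ∈ B ++ [d] := by
            rw [hsplit.2]; simp
          rw [← hc1] at this
          rcases List.mem_append.1 this with h' | h'
          · exact hcnB h'
          · exact hcd (by simpa using h')
  let cyc : G.Walk c c := SimpleGraph.Walk.cons hAc.symm p
  have hcyc : cyc.IsCycle := (SimpleGraph.Walk.cons_isCycle_iff p hAc.symm).2 ⟨hpath, hclose⟩
  have hAlen : 1 ≤ A.length := List.length_pos_iff.2 hAne
  have hBlen : 1 ≤ B.length := List.length_pos_iff.2 hBne
  have hlen : 4 ≤ cyc.length := by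
    show 4 ≤ (SimpleGraph.Walk.cons hAc.symm p).length
    rw [SimpleGraph.Walk.length_cons]
    show 4 ≤ (q1.append q2.reverse).length + 1
    rw [SimpleGraph.Walk.length_append, SimpleGraph.Walk.length_reverse, hlen1, hlen2]
    have h5 : A.tail.length + 1 = A.length := by rw [heA]; rfl
    simp only [List.length_append, List.length_singleton]
    omega
  obtain ⟨u, w, hu, hw, huw, hnedge⟩ := hch cyc hcyc hlen
  have hsupcyc : cyc.support = c :: p.support := SimpleGraph.Walk.support_cons _ _
  have memcase : ∀ z, z ∈ cyc.support → z = c ∨ z ∈ A ∨ z = d ∨ z ∈ B := by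
    intro z hz
    rw [hsupcyc, hsupp] at hz
    simp only [List.mem_cons, List.mem_append, List.mem_singleton, List.mem_reverse] at hz
    tauto
  have hedgcyc : cyc.edges = s(c, a0) :: p.edges := rfl
  have E2 : ∀ e ∈ edgeList (A ++ [d]), e ∈ cyc.edges := by
    intro e he
    rw [hedgcyc, hedgp]
    exact List.mem_cons_of_mem _ (List.mem_append_left _ he)
  have E3 : ∀ e ∈ edgeList (c :: (B ++ [d])), e ∈ cyc.edges := by
    intro e he
    rw [hedgcyc, hedgp]
    exact List.mem_cons_of_mem _ (List.mem_append_right _ (List.mem_reverse.2 he))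
  have memA : ∀ z, z ∈ A → z = a0 ∨ z ∈ A.tail := by
    intro z hz
    rw [heA] at hz
    exact List.mem_cons.1 hz
  have memA' : ∀ z, z ∈ A → z ∈ A.dropLast ∨ z = aL := by
    intro z hz
    rw [← List.dropLast_append_getLast hAne] at hz
    rcases List.mem_append.1 hz with h' | h'
    · exact Or.inl h'
    · exact Or.inr (by simpa using h')
  have memB : ∀ z, z ∈ B → z = b0 ∨ z ∈ B.tail := by
    intro z hz
    rw [heB] at hz
    exact List.mem_cons.1 hz
  have memB' : ∀ z, z ∈ B → z ∈ B.dropLast ∨ z = bL := by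
    intro z hz
    rw [← List.dropLast_append_getLast hBne] at hz
    rcases List.mem_append.1 hz with h' | h'
    · exact Or.inl h'
    · exact Or.inr (by simpa using h')
  -- membership of particular edges
  have inCA : s(c, a0) ∈ cyc.edges := by rw [hedgcyc]; exact List.mem_cons_self
  have inCB : s(c, b0) ∈ cyc.edges := by
    refine E3 _ ?_
    have : c :: (B ++ [d]) = [] ++ c :: b0 :: (B.tail ++ [d]) := by
      simp only [List.nil_append]
      rw [heB]
      rfl
    rw [this]
    exact edgeList_of_split [] _
  have inAd : s(aL, d) ∈ cyc.edges := by
    refine E2 _ ?_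
    have : A ++ [d] = A.dropLast ++ aL :: d :: [] := by
      rw [← List.dropLast_append_getLast hAne]
      simp [haL]
    rw [this]
    exact edgeList_of_split A.dropLast []
  have inBd : s(bL, d) ∈ cyc.edges := by
    refine E3 _ ?_
    have : c :: (B ++ [d]) = (c :: B.dropLast) ++ bL :: d :: [] := by
      conv_lhs => rw [← List.dropLast_append_getLast hBne]
      simp [hbL]
    rw [this]
    exact edgeList_of_split (c :: B.dropLast) []
  have inAA : ∀ u' w', u' ∈ A → w' ∈ A → G.Adj u' w' → s(u', w') ∈ cyc.edges := by
    intro u' w' hu' hw' hadj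
    obtain ⟨l₁, l₂, hs⟩ := NC_adj_split hncA hu' hw' hadj
    rcases hs with hs | hs
    · refine E2 _ ?_
      have : A ++ [d] = l₁ ++ u' :: w' :: (l₂ ++ [d]) := by rw [hs]; simp
      rw [this]
      exact edgeList_of_split l₁ _
    · rw [Sym2.eq_swap]
      refine E2 _ ?_
      have : A ++ [d] = l₁ ++ w' :: u' :: (l₂ ++ [d]) := by rw [hs]; simp
      rw [this]
      exact edgeList_of_split l₁ _
  have inBB : ∀ u' w', u' ∈ B → w' ∈ B → G.Adj u' w' → s(u', w') ∈ cyc.edges := by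
    intro u' w' hu' hw' hadj
    obtain ⟨l₁, l₂, hs⟩ := NC_adj_split hncB hu' hw' hadj
    rcases hs with hs | hs
    · refine E3 _ ?_
      have : c :: (B ++ [d]) = (c :: l₁) ++ u' :: w' :: (l₂ ++ [d]) := by rw [hs]; simp
      rw [this]
      exact edgeList_of_split (c :: l₁) _
    · rw [Sym2.eq_swap]
      refine E3 _ ?_
      have : c :: (B ++ [d]) = (c :: l₁) ++ w' :: u' :: (l₂ ++ [d]) := by rw [hs]; simp
      rw [this]
      exact edgeList_of_split (c :: l₁) _
  -- the main case bash
  have main : ∀ u' w', (u' = c ∨ u' ∈ A ∨ u' = d ∨ u' ∈ B) →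
      (w' = c ∨ w' ∈ A ∨ w' = d ∨ w' ∈ B) → G.Adj u' w' → s(u', w') ∈ cyc.edges := by
    intro u' w' hu' hw' hadj
    rcases hu' with rfl | huA | rfl | huB
    · -- u' = c
      rcases hw' with rfl | hwA | rfl | hwB
      · exact absurd hadj (G.loopless.irrefl _)
      · rcases memA w' hwA with rfl | ht
        · exact inCA
        · exact absurd hadj.symm (hAtc w' ht)
      · exact absurd hadj.symm hdc
      · rcases memB w' hwB with rfl | ht
        · exact inCB
        · exact absurd hadj.symm (hBtc w' ht)
    · rcases hw' with rfl | hwA | rfl | hwB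
      · rw [Sym2.eq_swap]
        rcases memA u' huA with rfl | ht
        · exact inCA
        · exact absurd hadj (hAtc u' ht)
      · exact inAA u' w' huA hwA hadj
      · rcases memA' u' huA with ht | rfl
        · exact absurd hadj (hdA' u' ht)
        · exact inAd
      · exact absurd hadj (hcross u' huA w' hwB).1
    · rcases hw' with rfl | hwA | rfl | hwB
      · exact absurd hadj hdc
      · rcases memA' w' hwA with ht | rfl
        · exact absurd hadj.symm (hdA' w' ht)
        · rw [Sym2.eq_swap]; exact inAd
      · exact absurd hadj (G.loopless.irrefl _)
      · rcases memB' w' hwB with ht | rfl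
        · exact absurd hadj.symm (hdB' w' ht)
        · rw [Sym2.eq_swap]; exact inBd
    · rcases hw' with rfl | hwA | rfl | hwB
      · rw [Sym2.eq_swap]
        rcases memB u' huB with rfl | ht
        · exact inCB
        · exact absurd hadj (hBtc u' ht)
      · exact absurd hadj.symm (hcross w' hwA u' huB).1
      · rcases memB' u' huB with ht | rfl
        · exact absurd hadj (hdB' u' ht)
        · exact inBd
      · exact inBB u' w' huB hwB hadj
  exact hnedge (main u w (memcase u hu) (memcase w hw) huw)

section MCS

variable [DecidableRel G.Adj] {σ : List V}

lemma getLast_eq_getLastD (t : List V) (y : V) : ∀ h, (y :: t).getLast h = t.getLastD y := by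
  induction t generalizing y with
  | nil => intro h; rfl
  | cons z t' ih =>
    intro h
    rw [List.getLast_cons (by simp), List.getLastD_cons]
    exact ih z _

/-- The MCS exchange property. -/
lemma mcs_exchange (hσ : IsMCSOrder G σ) {u v w : V}
    (h1 : σ.idxOf u < σ.idxOf v) (h2 : σ.idxOf v < σ.idxOf w)
    (huw : G.Adj u w) (huv : ¬ G.Adj u v) :
    ∃ d, σ.idxOf d < σ.idxOf v ∧ G.Adj d v ∧ ¬ G.Adj d w := by
  by_contra hcon
  push_neg at hcon
  have hv : v ∈ σ := hσ.2 v
  set i := σ.idxOf v with hi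
  have hilen : i < σ.length := List.idxOf_lt_length_iff.2 hv
  have hwnot : w ∉ σ.take i := by
    intro hmem
    have := indexOf_lt_of_mem_take hmem
    omega
  have hlab := hσ.1.2 i hilen w hwnot
  have hgt : σ.get ⟨i, hilen⟩ = v := List.getElem_idxOf hilen
  rw [hgt] at hlab
  have humem : u ∈ σ.take i :=
    mem_take_of_indexOf_lt (List.idxOf_lt_length_iff.1 (h1.trans hilen)) h1
  have hstrict : (σ.take i).countP (fun z => decide (G.Adj z v)) <
      (σ.take i).countP (fun z => decide (G.Adj z w)) := by
    refine countP_strict_mono ?_ humem (by simp [huw]) (by simp [huv])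
    intro z hz hp
    have hlt := indexOf_lt_of_mem_take hz
    simp only [decide_eq_true_eq] at hp ⊢
    exact hcon z hlt hp
  have hlt : mcsLabel G (σ.take i) v < mcsLabel G (σ.take i) w := hstrict
  omega

def descRel (σ : List V) : V → V → Prop := fun u v => σ.idxOf v < σ.idxOf u

lemma getLast_congr {l l' : List V} (h : l = l') (h1 : l ≠ []) :
    l.getLast h1 = l'.getLast (h ▸ h1) := by subst h; rfl

lemma IsPrefix_head_eq {l₁ l₂ : List V} (h : l₁ <+: l₂) (h1 : l₁ ≠ []) (h2 : l₂ ≠ []) :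
    l₁.head h1 = l₂.head h2 := by
  obtain ⟨r, rfl⟩ := h
  rw [List.head_append]
  simp [h1]

/-- Invariant for one of the two descending chains. -/
structure CInv (G : SimpleGraph V) [DecidableRel G.Adj] (σ : List V) (c h0 : V)
    (t : List V) : Prop where
  chain : List.Chain G.Adj h0 t
  desc : (h0 :: t).Pairwise (descRel σ)
  nc : NCfree G (h0 :: t)
  tailc : ∀ u ∈ t, ¬ G.Adj u c

lemma desc_le_head {t : List V} {h0 : V}
    (hd : (h0 :: t).Pairwise (descRel σ)) :
    ∀ z ∈ h0 :: t, σ.idxOf z ≤ σ.idxOf h0 := by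
  intro z hz
  rcases List.mem_cons.1 hz with rfl | hz'
  · exact le_rfl
  · exact ((List.pairwise_cons.1 hd).1 z hz').le

lemma desc_getLastD {t : List V} {h0 : V}
    (hd : (h0 :: t).Pairwise (descRel σ)) :
    ∀ z ∈ h0 :: t, z = t.getLastD h0 ∨ σ.idxOf (t.getLastD h0) < σ.idxOf z := by
  induction t generalizing h0 with
  | nil => intro z hz; left; simpa using hz
  | cons y t' ih =>
    intro z hz
    rw [List.getLastD_cons]
    rcases List.mem_cons.1 hz with rfl | hz'
    · right
      have hmem : t'.getLastD y ∈ y :: t' := List.getLastD_mem_cons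
      exact (List.pairwise_cons.1 hd).1 _ hmem
    · exact ih (List.pairwise_cons.1 hd).2 z hz'

/-- Bundled context for the Tarjan–Yannakakis induction. -/
structure TYCtx (G : SimpleGraph V) [DecidableRel G.Adj] (σ : List V) (c a b : V) : Prop where
  hch : IsChordal G
  hσ : IsMCSOrder G σ
  hac : G.Adj a c
  hbc : G.Adj b c
  hab : ¬ G.Adj a b
  hpab : σ.idxOf a < σ.idxOf b
  hpbc : σ.idxOf b < σ.idxOf c
  IHc : ∀ c' a' b', σ.idxOf c' < σ.idxOf c → σ.idxOf a' < σ.idxOf c' →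
    σ.idxOf b' < σ.idxOf c' → G.Adj a' c' → G.Adj b' c' → a' ≠ b' → G.Adj a' b'
  IHb : ∀ b' a', σ.idxOf b' < σ.idxOf b → σ.idxOf a' < σ.idxOf b' →
    G.Adj a' c → G.Adj b' c → G.Adj a' b'
  IHa : ∀ a', σ.idxOf a' < σ.idxOf a → G.Adj a' c → G.Adj a' b

lemma pos_inj (hσ : IsMCSOrder G σ) {z z' : V} (h : σ.idxOf z = σ.idxOf z') : z = z' :=
  indexOf_inj (hσ.2 z) (hσ.2 z') h

/-- Propagate adjacency to `d` along a descending chain of vertices below `c`,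
using the clique-below induction hypothesis. -/
lemma chain_adj_propagate {c a b : V} (ctx : TYCtx G σ c a b) {d : V} :
    ∀ (t : List V) (h0 : V), List.Chain G.Adj h0 t →
      (h0 :: t).Pairwise (descRel σ) →
      (∀ z ∈ h0 :: t, σ.idxOf z < σ.idxOf c ∧ σ.idxOf d < σ.idxOf z) →
      G.Adj d h0 → G.Adj d (t.getLastD h0) := by
  intro t
  induction t with
  | nil => intro h0 _ _ _ h; exact h
  | cons y t' ih =>
    intro h0 hc hd hcond hadj
    unfold List.Chain at hc; rw [List.isChain_cons_cons] at hc
    have hy : y ∈ h0 :: y :: t' := by simp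
    have hh0 : h0 ∈ h0 :: y :: t' := by simp
    have hy2 := hcond y hy
    have hh02 := hcond h0 hh0
    have hdy : σ.idxOf y < σ.idxOf h0 := (List.pairwise_cons.1 hd).1 y (by simp)
    
    have hne : d ≠ y := fun h => by rw [h] at hy2; omega
    have hady : G.Adj d y :=
      ctx.IHc h0 d y hh02.1 hh02.2 hdy hadj hc.1.symm hne
    rw [List.getLastD_cons]
    exact ih y hc.2 (List.pairwise_cons.1 hd).2 (fun z hz => hcond z (by simp [List.mem_cons.1 hz])) hady

/-- One step of the descent: extend the chain with the currently-larger end. -/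
lemma step {c a b : V} (ctx : TYCtx G σ c a b) {hX hY : V} {tX tY : List V}
    (hheads : (hX = a ∧ hY = b) ∨ (hX = b ∧ hY = a))
    (iX : CInv G σ c hX tX) (iY : CInv G σ c hY tY)
    (cross : ∀ u ∈ hX :: tX, ∀ v ∈ hY :: tY, ¬ G.Adj u v ∧ u ≠ v)
    (hends : σ.idxOf (tY.getLastD hY) < σ.idxOf (tX.getLastD hX)) :
    ∃ tX', CInv G σ c hX tX' ∧
      (∀ u ∈ hX :: tX', ∀ v ∈ hY :: tY, ¬ G.Adj u v ∧ u ≠ v) ∧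
      σ.idxOf (tX'.getLastD hX) < σ.idxOf (tX.getLastD hX) := by
  have hσ := ctx.hσ
  have hXc : G.Adj hX c := by
    rcases hheads with ⟨h1, _⟩ | ⟨h1, _⟩ <;> rw [h1]
    exacts [ctx.hac, ctx.hbc]
  have hYc : G.Adj hY c := by
    rcases hheads with ⟨_, h2⟩ | ⟨_, h2⟩ <;> rw [h2]
    exacts [ctx.hbc, ctx.hac]
  have hXpos : σ.idxOf hX < σ.idxOf c := by
    rcases hheads with ⟨h1, _⟩ | ⟨h1, _⟩ <;> rw [h1]
    exacts [ctx.hpab.trans ctx.hpbc, ctx.hpbc]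
  have hYpos : σ.idxOf hY < σ.idxOf c := by
    rcases hheads with ⟨_, h2⟩ | ⟨_, h2⟩ <;> rw [h2]
    exacts [ctx.hpbc, ctx.hpab.trans ctx.hpbc]
  set XL := hX :: tX with hXL
  set YL := hY :: tY with hYL
  set vX := tX.getLastD hX with hvX
  set vY := tY.getLastD hY with hvY
  have hvXmem : vX ∈ XL := List.getLastD_mem_cons
  have hvYmem : vY ∈ YL := List.getLastD_mem_cons
  have hvXle : ∀ z ∈ XL, σ.idxOf vX ≤ σ.idxOf z := by
    intro z hz
    rcases desc_getLastD iX.desc z hz with h | h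
    · rw [h]
    · exact h.le
  have hvYle : ∀ z ∈ YL, σ.idxOf vY ≤ σ.idxOf z := by
    intro z hz
    rcases desc_getLastD iY.desc z hz with h | h
    · rw [h]
    · exact h.le
  have hposXc : ∀ z ∈ XL, σ.idxOf z < σ.idxOf c := fun z hz =>
    lt_of_le_of_lt (desc_le_head iX.desc z hz) hXpos
  have hposYc : ∀ z ∈ YL, σ.idxOf z < σ.idxOf c := fun z hz =>
    lt_of_le_of_lt (desc_le_head iY.desc z hz) hYpos
  have hvXc : σ.idxOf vX < σ.idxOf c := hposXc vX hvXmem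
  -- find the new vertex d
  obtain ⟨d, hd1, hd2, hd3⟩ : ∃ d, σ.idxOf d < σ.idxOf vX ∧ G.Adj d vX ∧ ¬ G.Adj d c := by
    set p : V → Bool := fun z => decide (σ.idxOf vX < σ.idxOf z) with hp
    have hDrne : YL.dropWhile p ≠ [] := by
      intro h
      have := List.dropWhile_eq_nil_iff.1 h vY hvYmem
      simp only [hp, decide_eq_true_eq] at this
      omega
    set u0 := (YL.dropWhile p).head hDrne with hu0def
    have hu0p : p u0 = false := List.head_dropWhile_not p hDrne
    have hu0mem : u0 ∈ YL := (List.dropWhile_sublist p).subset (List.head_mem hDrne)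
    have hXne : u0 ≠ vX := fun h => (cross vX hvXmem u0 hu0mem).2 h.symm
    have hu0lt : σ.idxOf u0 < σ.idxOf vX := by
      simp only [hp, decide_eq_false_iff_not, not_lt] at hu0p
      rcases lt_or_eq_of_le hu0p with h | h
      · exact h
      · exact absurd (pos_inj hσ h) hXne
    have hnadj : ¬ G.Adj u0 vX := fun h => (cross vX hvXmem u0 hu0mem).1 h.symm
    set W := YL.takeWhile p with hWdef
    by_cases hWe : W = []
    · -- u0 = hY
      have hdr : YL.dropWhile p = YL := by
        have := List.takeWhile_append_dropWhile (p := p) (l := YL)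
        rwa [← hWdef, hWe, List.nil_append] at this
      have hu0Y : u0 = hY := by
        have h7 : YL.dropWhile p = hY :: tY := by rw [hdr]
        rw [hu0def]
        simp only [h7, List.head_cons]
      obtain ⟨d, hda, hdb, hdc2⟩ :=
        mcs_exchange hσ (u := u0) (v := vX) (w := c) hu0lt hvXc (hu0Y ▸ hYc) hnadj
      exact ⟨d, hda, hdb, hdc2⟩
    · -- W nonempty
      have hsplit : W ++ (u0 :: (YL.dropWhile p).tail) = YL := by
        rw [hu0def, List.cons_head_tail, hWdef, List.takeWhile_append_dropWhile]
      have hWpre : W <+: YL := List.takeWhile_prefix p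
      have hWhead : W.head hWe = hY := IsPrefix_head_eq hWpre hWe (by simp [hYL])
      set w0 := W.getLast hWe with hw0def
      have hw0mem : w0 ∈ W := List.getLast_mem hWe
      have hw0p : σ.idxOf vX < σ.idxOf w0 := by
        have := List.mem_takeWhile_imp (hWdef ▸ hw0mem)
        simpa [hp] using this
      have hadjw0u0 : G.Adj w0 u0 := by
        have hch : YL.Chain' G.Adj := iY.chain
        rw [← hsplit] at hch
        refine (List.isChain_append.1 hch).2.2 w0 ?_ u0 ?_
        · rw [List.getLast?_eq_getLast hWe]
          simp [hw0def]
        · simp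
      obtain ⟨d, hda, hdb, hdc2⟩ :=
        mcs_exchange hσ (u := u0) (v := vX) (w := w0) hu0lt hw0p hadjw0u0.symm hnadj
      refine ⟨d, hda, hdb, ?_⟩
      intro hdc'
      have hhYW : hY ∈ W := hWhead ▸ List.head_mem hWe
      have hhYp : σ.idxOf vX < σ.idxOf hY := by
        have := List.mem_takeWhile_imp (hWdef ▸ hhYW)
        simpa [hp] using this
      have hdhY : σ.idxOf d < σ.idxOf hY := hda.trans hhYp
      have hadjdhY : G.Adj d hY := by
        rcases hheads with ⟨hh1, hh2⟩ | ⟨hh1, hh2⟩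
        · -- hX = a, hY = b : use IHa
          have hda' : σ.idxOf d < σ.idxOf a := by
            have h5 := hvXle hX (by simp [hXL])
            rw [hh1] at h5
            omega
          rw [hh2]
          exact ctx.IHa d hda' hdc'
        · -- hX = b, hY = a : use IHb with b' := a
          rw [hh2]
          refine ctx.IHb a d ctx.hpab ?_ hdc' ctx.hac
          rw [← hh2]
          exact hdhY
      -- propagate along W
      have hchYL2 : YL.Chain' G.Adj := iY.chain
      have hWchain : W.Chain' G.Adj := List.IsChain.prefix hchYL2 hWpre
      have hWdesc : W.Pairwise (descRel σ) := iY.desc.sublist hWpre.sublist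
      have hWeq : W = hY :: W.tail := by
        conv_lhs => rw [← List.cons_head_tail hWe, hWhead]
      obtain ⟨Wt, hWt⟩ : ∃ t', W = hY :: t' := ⟨W.tail, hWeq⟩
      rw [hWt] at hWchain hWdesc
      have hchainW : List.Chain G.Adj hY Wt := hWchain
      have hcond : ∀ z ∈ hY :: Wt, σ.idxOf z < σ.idxOf c ∧ σ.idxOf d < σ.idxOf z := by
        intro z hz
        rw [← hWt] at hz
        refine ⟨hposYc z (hWpre.subset hz), ?_⟩
        have := List.mem_takeWhile_imp (hWdef ▸ hz)
        simp only [hp, decide_eq_true_eq] at this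
        omega
      have hprop := chain_adj_propagate ctx Wt hY hchainW hWdesc hcond hadjdhY
      have hw0eq : Wt.getLastD hY = w0 := by
        rw [hw0def, getLast_congr hWt hWe, getLast_eq_getLastD]
      rw [hw0eq] at hprop
      exact hdc2 hprop
  -- d is not in the Y chain
  have hdnotY : d ∉ YL := fun hmem => (cross vX hvXmem d hmem).1 hd2.symm
  have hcd : c ≠ d := by
    intro h
    rw [h] at hvXc
    omega
  -- build the prefix A of the X chain ending at the first vertex adjacent to d
  set q : V → Bool := fun z => decide (¬ G.Adj d z) with hq
  have hDrAne : XL.dropWhile q ≠ [] := by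
    intro h
    have := List.dropWhile_eq_nil_iff.1 h vX hvXmem
    simp only [hq, decide_eq_true_eq] at this
    exact this hd2
  set xj := (XL.dropWhile q).head hDrAne with hxj
  set T := XL.takeWhile q with hT
  set A := T ++ [xj] with hA
  have hAne : A ≠ [] := by simp [hA]
  have hATL : A ++ (XL.dropWhile q).tail = XL := by
    rw [hA, List.append_assoc, List.singleton_append, hxj, List.cons_head_tail, hT,
      List.takeWhile_append_dropWhile]
  have hApre : A <+: XL := ⟨_, hATL⟩
  have hAsub : ∀ z ∈ A, z ∈ XL := fun z hz => hApre.subset hz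
  have hheadA : A.head hAne = hX := IsPrefix_head_eq hApre hAne (by simp [hXL])
  have heqA : hX :: A.tail = A := by
    rw [← hheadA]
    exact List.cons_head_tail hAne
  have hxjadj : G.Adj d xj := by
    have := List.head_dropWhile_not q hDrAne
    rw [← hxj] at this
    simpa [hq] using this
  have hTnadj : ∀ u ∈ T, ¬ G.Adj d u := by
    intro u hu
    have := List.mem_takeWhile_imp (hT ▸ hu)
    simpa [hq] using this
  have hlastA : A.getLast hAne = xj := by
    rw [getLast_congr hA hAne]
    exact List.getLast_concat
  have hdropA : A.dropLast = T := by
    rw [hA]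
    exact List.dropLast_concat
  have hchXL : XL.Chain' G.Adj := iX.chain
  have hchainA : A.Chain' G.Adj := List.IsChain.prefix hchXL hApre
  have hncA : NCfree G A := NCfree_prefix iX.nc hApre
  have hdescA : A.Pairwise (descRel σ) := iX.desc.sublist hApre.sublist
  have hndA : A.Nodup := hdescA.imp fun h => by
    intro heq
    subst heq
    exact absurd h (lt_irrefl _)
  have hdAlt : ∀ z ∈ A, σ.idxOf d < σ.idxOf z := fun z hz =>
    hd1.trans_le (hvXle z (hAsub _ hz))
  have hdnotA : d ∉ A := fun h => absurd (hdAlt d h) (lt_irrefl _)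
  have hcnotX : c ∉ XL := fun h => absurd (hposXc c h) (lt_irrefl _)
  have hcnotY : c ∉ YL := fun h => absurd (hposYc c h) (lt_irrefl _)
  have htailA : ∀ u ∈ A.tail, u ∈ tX := by
    intro u hu
    have h5 : A.tail ++ (XL.dropWhile q).tail = tX := by
      have h6 := hATL
      rw [← heqA, List.cons_append, hXL] at h6
      exact List.tail_eq_of_cons_eq h6
    rw [← h5]
    exact List.mem_append_left _ hu
  by_cases hdy : ∃ z ∈ YL, G.Adj d z
  · -- adjacency into the Y chain: chordless cycle, contradiction
    exfalso
    obtain ⟨z0, hz0mem, hz0adj⟩ := hdy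
    have hDrBne : YL.dropWhile q ≠ [] := by
      intro h
      have := List.dropWhile_eq_nil_iff.1 h z0 hz0mem
      simp only [hq, decide_eq_true_eq] at this
      exact this hz0adj
    set yl := (YL.dropWhile q).head hDrBne with hyl
    set TB := YL.takeWhile q with hTB
    set B := TB ++ [yl] with hB
    have hBne : B ≠ [] := by simp [hB]
    have hBTL : B ++ (YL.dropWhile q).tail = YL := by
      rw [hB, List.append_assoc, List.singleton_append, hyl, List.cons_head_tail, hTB,
        List.takeWhile_append_dropWhile]
    have hBpre : B <+: YL := ⟨_, hBTL⟩
    have hBsub : ∀ z ∈ B, z ∈ YL := fun z hz => hBpre.subset hz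
    have hheadB : B.head hBne = hY := IsPrefix_head_eq hBpre hBne (by simp [hYL])
    have heqB : hY :: B.tail = B := by
      rw [← hheadB]
      exact List.cons_head_tail hBne
    have hyladj : G.Adj d yl := by
      have := List.head_dropWhile_not q hDrBne
      rw [← hyl] at this
      simpa [hq] using this
    have hTBnadj : ∀ u ∈ TB, ¬ G.Adj d u := by
      intro u hu
      have := List.mem_takeWhile_imp (hTB ▸ hu)
      simpa [hq] using this
    have hlastB : B.getLast hBne = yl := by
      rw [getLast_congr hB hBne]
      exact List.getLast_concat
    have hdropB : B.dropLast = TB := by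
      rw [hB]
      exact List.dropLast_concat
    have hchYL : YL.Chain' G.Adj := iY.chain
    have hchainB : B.Chain' G.Adj := List.IsChain.prefix hchYL hBpre
    have hncB : NCfree G B := NCfree_prefix iY.nc hBpre
    have hdescB : B.Pairwise (descRel σ) := iY.desc.sublist hBpre.sublist
    have hndB : B.Nodup := hdescB.imp fun h => by
      intro heq
      subst heq
      exact absurd h (lt_irrefl _)
    have htailB : ∀ u ∈ B.tail, u ∈ tY := by
      intro u hu
      have h5 : B.tail ++ (YL.dropWhile q).tail = tY := by
        have h6 := hBTL
        rw [← heqB, List.cons_append, hYL] at h6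
        exact List.tail_eq_of_cons_eq h6
      rw [← h5]
      exact List.mem_append_left _ hu
    refine cycleContra ctx.hch hAne hBne hchainA hchainB hncA hncB hndA hndB
      (by rw [hheadA]; exact hXc) (by rw [hheadB]; exact hYc)
      (fun u hu => iX.tailc u (htailA u hu)) (fun u hu => iY.tailc u (htailB u hu))
      (fun u hu v hv => cross u (hAsub _ hu) v (hBsub _ hv))
      (by rw [hlastA]; exact hxjadj.symm) (by rw [hlastB]; exact hyladj.symm)
      (by rw [hdropA]; exact fun u hu h => hTnadj u hu h.symm)
      (by rw [hdropB]; exact fun u hu h => hTBnadj u hu h.symm)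
      hd3 hdnotA (fun h => hdnotY (hBsub _ h))
      (fun h => hcnotX (hAsub _ h)) (fun h => hcnotY (hBsub _ h)) hcd
  · -- no adjacency into Y: extend the X chain by d
    push_neg at hdy
    have hdnYne : ∀ v ∈ YL, d ≠ v := fun v hv h => hdnotY (h ▸ hv)
    have hAd : hX :: (A.tail ++ [d]) = A ++ [d] := by
      rw [← heqA]
      rfl
    refine ⟨A.tail ++ [d], ?_, ?_, ?_⟩
    · constructor
      · show List.Chain G.Adj hX (A.tail ++ [d])
        have hchAd : (A ++ [d]).Chain' G.Adj := by
          refine List.isChain_append.2 ⟨hchainA, List.isChain_singleton d, ?_⟩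
          intro x hx y hy
          rw [List.getLast?_eq_getLast hAne] at hx
          simp only [Option.mem_some_iff] at hx
          simp only [List.head?_cons, Option.mem_some_iff] at hy
          rw [← hx, ← hy, hlastA]
          exact hxjadj.symm
        rw [← hAd] at hchAd
        exact hchAd
      · show (hX :: (A.tail ++ [d])).Pairwise (descRel σ)
        rw [hAd]
        refine List.pairwise_append.2 ⟨hdescA, List.pairwise_singleton _ _, ?_⟩
        intro x hx y hy
        have : y = d := by simpa using hy
        subst this
        exact hdAlt x hx
      · show NCfree G (hX :: (A.tail ++ [d]))
        rw [hAd]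
        refine NCfree_concat hncA ?_
        rw [hdropA]
        exact fun u hu h => hTnadj u hu h.symm
      · intro u hu
        rcases List.mem_append.1 hu with h' | h'
        · exact iX.tailc u (htailA u h')
        · have : u = d := by simpa using h'
          subst this
          exact hd3
    · intro u hu v hv
      rw [hAd] at hu
      rcases List.mem_append.1 hu with h' | h'
      · exact cross u (hAsub _ h') v hv
      · have : u = d := by simpa using h'
        subst this
        exact ⟨hdy v hv, hdnYne v hv⟩
    · rw [List.getLastD_concat]
      exact hd1

/-- The two-chain descent: from an initial nonadjacent pair of neighbors of `c`
we derive a contradiction. -/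
lemma descent {c a b : V} (ctx : TYCtx G σ c a b) :
    ∀ m (ta tb : List V), CInv G σ c a ta → CInv G σ c b tb →
      (∀ u ∈ a :: ta, ∀ v ∈ b :: tb, ¬ G.Adj u v ∧ u ≠ v) →
      max (σ.idxOf (ta.getLastD a)) (σ.idxOf (tb.getLastD b)) ≤ m → False := by
  intro m
  induction m using Nat.strong_induction_on with
  | _ m ih =>
    intro ta tb ia ib cross hm
    have hvamem : ta.getLastD a ∈ a :: ta := List.getLastD_mem_cons
    have hvbmem : tb.getLastD b ∈ b :: tb := List.getLastD_mem_cons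
    have hne : ta.getLastD a ≠ tb.getLastD b := (cross _ hvamem _ hvbmem).2
    have hposne : σ.idxOf (ta.getLastD a) ≠ σ.idxOf (tb.getLastD b) :=
      fun h => hne (pos_inj ctx.hσ h)
    rcases lt_or_gt_of_ne hposne with hlt | hlt
    · -- extend the b-chain
      obtain ⟨tb', ib', cross', hdec⟩ := step ctx (Or.inr ⟨rfl, rfl⟩) ib ia
        (fun u hu v hv => ⟨fun h => (cross v hv u hu).1 h.symm,
          fun h => (cross v hv u hu).2 h.symm⟩) hlt
      have hnewmax : max (σ.idxOf (ta.getLastD a)) (σ.idxOf (tb'.getLastD b)) <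
          σ.idxOf (tb.getLastD b) := max_lt hlt hdec
      have hmb : σ.idxOf (tb.getLastD b) ≤ m := le_trans (le_max_right _ _) hm
      exact ih _ (lt_of_lt_of_le hnewmax hmb) ta tb' ia ib'
        (fun u hu v hv => ⟨fun h => (cross' v hv u hu).1 h.symm,
          fun h => (cross' v hv u hu).2 h.symm⟩) le_rfl
    · -- extend the a-chain
      obtain ⟨ta', ia', cross', hdec⟩ := step ctx (Or.inl ⟨rfl, rfl⟩) ia ib cross hlt
      have hnewmax : max (σ.idxOf (ta'.getLastD a)) (σ.idxOf (tb.getLastD b)) <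
          σ.idxOf (ta.getLastD a) := max_lt hdec hlt
      have hma : σ.idxOf (ta.getLastD a) ≤ m := le_trans (le_max_left _ _) hm
      exact ih _ (lt_of_lt_of_le hnewmax hma) ta' tb ia' ib cross' le_rfl

/-- Tarjan–Yannakakis: in an MCS order of a chordal graph, any two earlier
neighbors of a vertex are adjacent. -/
theorem TY (hch : IsChordal G) (hσ : IsMCSOrder G σ) :
    ∀ c a b, σ.idxOf a < σ.idxOf c → σ.idxOf b < σ.idxOf c →
      G.Adj a c → G.Adj b c → a ≠ b → G.Adj a b := by
  suffices H : ∀ n c, σ.idxOf c ≤ n → ∀ a b, σ.idxOf a < σ.idxOf c →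
      σ.idxOf b < σ.idxOf c → G.Adj a c → G.Adj b c → a ≠ b → G.Adj a b by
    intro c a b h1 h2 h3 h4 h5
    exact H _ c le_rfl a b h1 h2 h3 h4 h5
  intro n
  induction n using Nat.strong_induction_on with
  | _ n ihn =>
    intro c hc
    suffices H2 : ∀ k b', σ.idxOf b' ≤ k → σ.idxOf b' < σ.idxOf c →
        ∀ a', σ.idxOf a' < σ.idxOf b' → G.Adj a' c → G.Adj b' c → G.Adj a' b' by
      intro a b h1 h2 h3 h4 h5
      have hab : σ.idxOf a ≠ σ.idxOf b := fun h => h5 (pos_inj hσ h)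
      rcases lt_or_gt_of_ne hab with h | h
      · exact H2 _ b le_rfl h2 a h h3 h4
      · exact (H2 _ a le_rfl h1 b h h4 h3).symm
    intro k
    induction k using Nat.strong_induction_on with
    | _ k ihk =>
      intro b' hbk hbc
      suffices H3 : ∀ j a', σ.idxOf a' ≤ j → σ.idxOf a' < σ.idxOf b' →
          G.Adj a' c → G.Adj b' c → G.Adj a' b' by
        intro a' h1 h2 h3
        exact H3 _ a' le_rfl h1 h2 h3
      intro j
      induction j using Nat.strong_induction_on with
      | _ j ihj =>
        intro a' haj hab hac hbc'
        by_contra hnadj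
        have ctx : TYCtx G σ c a' b' :=
          { hch := hch
            hσ := hσ
            hac := hac
            hbc := hbc'
            hab := hnadj
            hpab := hab
            hpbc := hbc
            IHc := by
              intro c' a'' b'' hcc h1 h2 h3 h4 h5
              exact ihn (σ.idxOf c') (lt_of_lt_of_le hcc hc) c' le_rfl a'' b'' h1 h2 h3 h4 h5
            IHb := by
              intro b'' a'' h1 h2 h3 h4
              exact ihk (σ.idxOf b'') (lt_of_lt_of_le h1 hbk) b'' le_rfl (h1.trans hbc)
                a'' h2 h3 h4
            IHa := by
              intro a'' h1 h2
              exact ihj (σ.idxOf a'') (lt_of_lt_of_le h1 haj) a'' le_rfl (h1.trans hab)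
                h2 hbc' }
        have ia : CInv G σ c a' [] :=
          ⟨List.Chain.nil, List.pairwise_singleton _ _, NCfree_singleton _, by simp⟩
        have ib : CInv G σ c b' [] :=
          ⟨List.Chain.nil, List.pairwise_singleton _ _, NCfree_singleton _, by simp⟩
        have cross : ∀ u ∈ [a'], ∀ v ∈ [b'], ¬ G.Adj u v ∧ u ≠ v := by
          intro u hu v hv
          have hu' : u = a' := by simpa using hu
          have hv' : v = b' := by simpa using hv
          subst hu'
          subst hv'
          refine ⟨hnadj, fun h => ?_⟩
          rw [h] at hab
          omega
        exact descent ctx (max (σ.idxOf a') (σ.idxOf b')) [] [] ia ib cross le_rfl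

lemma prefix_pos {τ : List V} {x : V} {σ : List V} (hpre : (τ ++ [x]) <+: σ) (hx : x ∉ τ) :
    σ.idxOf x = τ.length ∧ ∀ w, w ∉ τ → w ≠ x → τ.length < σ.idxOf w := by
  obtain ⟨r, hr⟩ := hpre
  subst hr
  constructor
  · rw [List.idxOf_append_of_mem (by simp)]
    rw [List.idxOf_append_of_notMem hx]
    simp
  · intro w hw hwx
    have hnm : w ∉ τ ++ [x] := by
      intro h
      rcases List.mem_append.1 h with h' | h'
      · exact hw h'
      · exact hwx (by simpa using h')
    rw [List.idxOf_append_of_notMem hnm]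
    have : (τ ++ [x]).length = τ.length + 1 := by simp
    omega

/-- The heart of the main theorem: two MCS orders starting with `τ ++ [x]` and
`τ ++ [y]` respectively cannot induce the same orientation when `x` and `y` are
connected off `τ`. -/
lemma noBoth (hch : IsChordal G)
    (τ : List V) (x y : V) (hx : x ∉ τ) (hy : y ∉ τ) (hne : x ≠ y)
    {σ σ' : List V} (hσ : IsMCSOrder G σ) (hσ' : IsMCSOrder G σ')
    (hpre : (τ ++ [x]) <+: σ) (hpre' : (τ ++ [y]) <+: σ')
    (hagree : ∀ u v : V, G.Adj u v →
      (σ.idxOf u < σ.idxOf v ↔ σ'.idxOf u < σ'.idxOf v))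
    (hconn : (G.induce {w : V | w ∉ τ}).Reachable ⟨x, hx⟩ ⟨y, hy⟩) : False := by
  classical
  set s : Set V := {w : V | w ∉ τ} with hs
  obtain ⟨hxpos, hxmin⟩ := prefix_pos hpre hx
  obtain ⟨hypos', hymin'⟩ := prefix_pos hpre' hy
  have hadjval : ∀ {u v : ↥s}, (G.induce s).Adj u v → G.Adj u.val v.val := by
    intro u v h
    simpa using h
  have hadjmk : ∀ {u v : ↥s}, G.Adj u.val v.val → (G.induce s).Adj u v := by
    intro u v h
    simpa using h
  -- shortcut/terminal lemma along a walk
  have L2 : ∀ (zf v : ↥s) (q : (G.induce s).Walk v zf), zf = ⟨y, hy⟩ → ∀ (u : ↥s)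
      (h : (G.induce s).Adj u v), (SimpleGraph.Walk.cons h q).IsPath →
      σ.idxOf u.val < σ.idxOf v.val → u.val ≠ y →
      ∃ p' : (G.induce s).Walk u zf,
        p'.length < (SimpleGraph.Walk.cons h q).length := by
    intro zf v q
    induction q with
    | nil =>
      intro hzf u h hpath hlt hneu
      subst hzf
      exfalso
      have hadj : G.Adj u.val y := hadjval h
      have h1 : σ'.idxOf u.val < σ'.idxOf y := (hagree u.val y hadj).1 hlt
      have h2 : τ.length < σ'.idxOf u.val := hymin' u.val u.prop hneu
      omega
    | @cons v w' _ h₂ r ih =>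
      intro hzf u h hpath hlt hneu
      subst hzf
      have hvy : v.val ≠ y := by
        intro hvy
        have hveq : v = (⟨y, hy⟩ : ↥s) := Subtype.ext hvy
        have : v ∈ r.support := hveq ▸ r.end_mem_support
        have hnd := (SimpleGraph.Walk.isPath_def _).1 hpath
        rw [SimpleGraph.Walk.support_cons, SimpleGraph.Walk.support_cons] at hnd
        exact (List.nodup_cons.1 (List.nodup_cons.1 hnd).2).1 this
      have hvw : v.val ≠ w'.val := fun hh => (hadjval h₂).ne hh
      have hposne : σ.idxOf v.val ≠ σ.idxOf w'.val :=
        fun hh => hvw (indexOf_inj (hσ.2 _) (hσ.2 _) hh)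
      rcases lt_or_gt_of_ne hposne with hcase | hcase
      · -- ascending: recurse
        obtain ⟨p'', hp''⟩ := ih rfl v h₂ hpath.of_cons hcase hvy
        refine ⟨SimpleGraph.Walk.cons h p'', ?_⟩
        have e1 : (SimpleGraph.Walk.cons h p'').length = p''.length + 1 :=
          SimpleGraph.Walk.length_cons _ _
        have e2 : (SimpleGraph.Walk.cons h (SimpleGraph.Walk.cons h₂ r)).length =
            (SimpleGraph.Walk.cons h₂ r).length + 1 := SimpleGraph.Walk.length_cons _ _
        omega
      · -- peak at v : shortcut
        have huw : u ≠ w' := by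
          intro hh
          have hnd := (SimpleGraph.Walk.isPath_def _).1 hpath
          rw [SimpleGraph.Walk.support_cons, SimpleGraph.Walk.support_cons] at hnd
          exact (List.nodup_cons.1 hnd).1
            (by rw [hh]; exact List.mem_cons_of_mem _ r.start_mem_support)
        have hadjuw : G.Adj u.val w'.val :=
          TY hch hσ v.val u.val w'.val hlt hcase (hadjval h) (hadjval h₂).symm
            (fun hh => huw (Subtype.ext hh))
        refine ⟨SimpleGraph.Walk.cons (hadjmk hadjuw) r, ?_⟩
        have e1 : (SimpleGraph.Walk.cons (hadjmk hadjuw) r).length = r.length + 1 :=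
          SimpleGraph.Walk.length_cons _ _
        have e2 : (SimpleGraph.Walk.cons h (SimpleGraph.Walk.cons h₂ r)).length =
            (SimpleGraph.Walk.cons h₂ r).length + 1 := SimpleGraph.Walk.length_cons _ _
        have e3 : (SimpleGraph.Walk.cons h₂ r).length = r.length + 1 :=
          SimpleGraph.Walk.length_cons _ _
        omega
  -- iterate
  have K3 : ∀ n (w : ↥s) (p0 : (G.induce s).Walk w ⟨y, hy⟩), w = ⟨x, hx⟩ →
      p0.length ≤ n → False := by
    intro n
    induction n using Nat.strong_induction_on with
    | _ n ihn =>
      intro w p0 hw hlen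
      have hpath : p0.bypass.IsPath := p0.bypass_isPath
      have hlen2 : p0.bypass.length ≤ p0.length := p0.length_bypass_le
      cases hb : p0.bypass with
      | nil =>
        exact hne (congrArg Subtype.val hw.symm)
      | cons h q =>
        rename_i v'
        subst hw
        have hstart : σ.idxOf x < σ.idxOf v'.val := by
          have hvne : v'.val ≠ x := by
            intro hh
            exact (hadjval h).ne' hh
          have := hxmin v'.val v'.prop hvne
          omega
        obtain ⟨p', hp'⟩ := L2 _ v' q rfl ⟨x, hx⟩ h (hb ▸ hpath) hstart hne
        have hlt : p'.length < n := by
          rw [← hb] at hp'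
          omega
        exact ihn p'.length hlt _ p' rfl le_rfl
  obtain ⟨p⟩ := hconn
  exact K3 p.length ⟨x, hx⟩ p rfl le_rfl

end MCS

end Stmt6Aux

/-- If `x` and `y` both lie in the highest-label set after the MCS prefix `τ`
and are connected in the induced subgraph on the unvisited vertices, then the
AMOs extendable from `τ ++ [x]` are disjoint from those extendable from
`τ ++ [y]`. -/
theorem stmt6 {V : Type} [Fintype V] [DecidableEq V] (G : SimpleGraph V)
    [DecidableRel G.Adj] (hchordal : IsChordal G)
    (τ : List V) (hτ : IsMCSPrefix G τ) (hlen : τ.length < Fintype.card V)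
    (x y : V) (hx : x ∉ τ) (hy : y ∉ τ) (hne : x ≠ y)
    (hxmax : ∀ w : V, w ∉ τ → mcsLabel G τ w ≤ mcsLabel G τ x)
    (hymax : ∀ w : V, w ∉ τ → mcsLabel G τ w ≤ mcsLabel G τ y)
    (hconn : (G.induce {w : V | w ∉ τ}).Reachable ⟨x, hx⟩ ⟨y, hy⟩) :
    ¬ ∃ D : V → V → Prop,
        ExtendableFrom G (τ ++ [x]) D ∧ ExtendableFrom G (τ ++ [y]) D := by
  rintro ⟨D, ⟨σ, hσ, hpre, hD⟩, ⟨σ', hσ', hpre', hD'⟩⟩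
  have hagree : ∀ u v : V, G.Adj u v →
      (σ.idxOf u < σ.idxOf v ↔ σ'.idxOf u < σ'.idxOf v) := by
    intro u v hadj
    constructor
    · intro h
      exact ((hD' u v).1 ((hD u v).2 ⟨hadj, h⟩)).2
    · intro h
      exact ((hD u v).1 ((hD' u v).2 ⟨hadj, h⟩)).2
  exact Stmt6Aux.noBoth hchordal τ x y hx hy hne hσ hσ' hpre hpre' hagree hconn
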